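/- Let n, k be positive integers with n ≥ 2(k+1), let G be the web graph W_n^k, and let C ⊆ V(G) (C possibly empty). Then (G;C) is a clutter if and only if n > 2(k+1) or C = V(G). -/

import Mathlib

namespace LegalSeq

variable {V : Type*}

/-- The generalized neighborhood `N⟨v⟩`: the closed neighborhood of `v` if `v ∈ C`,
the open neighborhood otherwise. -/
noncomputable def gN [Fintype V] (G : SimpleGraph V) (C : Set V) (v : V) : Finset V := by
  classical
  exact (Set.toFinite (if v ∈ C then insert v (G.neighborSet v) else G.neighborSet v)).toFinset

/-- The instance `(G;C)` is a clutter if `u ◁ v` (i.e. `N⟨v⟩ ∖ N⟨u⟩ ≠ ∅`) for all pairs of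
distinct vertices `u, v`. -/
def IsClutter [Fintype V] (G : SimpleGraph V) (C : Set V) : Prop :=
  ∀ u v : V, u ≠ v → ¬ (gN G C v ⊆ gN G C u)

/-- The web graph `W_n^k`: vertices `{0, …, n−1}`, with `i ~ j` iff `0 < |i − j| ≤ k` or
`|i − j| ≥ n − k`. -/
def webG (n k : ℕ) : SimpleGraph (Fin n) where
  Adj i j := i ≠ j ∧ (Nat.dist i.1 j.1 ≤ k ∨ n - k ≤ Nat.dist i.1 j.1)
  symm := ⟨by
    intro i j h
    refine ⟨h.1.symm, ?_⟩
    rw [Nat.dist_comm]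
    exact h.2⟩
  loopless := ⟨fun i h => h.1 rfl⟩

lemma mem_gN [Fintype V] {G : SimpleGraph V} {C : Set V} {v w : V} :
    w ∈ gN G C v ↔ G.Adj v w ∨ (v ∈ C ∧ w = v) := by
  classical
  unfold gN
  rw [Set.Finite.mem_toFinset]
  by_cases hv : v ∈ C <;> simp [hv] <;> tauto

lemma webG_adj {n k : ℕ} {i j : Fin n} :
    (webG n k).Adj i j ↔ i.1 ≠ j.1 ∧ (Nat.dist i.1 j.1 ≤ k ∨ n - k ≤ Nat.dist i.1 j.1) := by
  simp [webG, Fin.ext_iff]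

lemma adjWitness (n k a b : ℕ) (hk : 1 ≤ k) (hn : 2 * (k + 1) ≤ n) (ha : a < n) (hb : b < n)
    (hab : a ≠ b) (hadj : Nat.dist a b ≤ k ∨ n - k ≤ Nat.dist a b) :
    ∃ m, m < n ∧ m ≠ b ∧ (Nat.dist b m ≤ k ∨ n - k ≤ Nat.dist b m) ∧
      m ≠ a ∧ k < Nat.dist a m ∧ Nat.dist a m < n - k := by
  by_cases hd : (a < b ∧ b - a ≤ k) ∨ (b < a ∧ n - k ≤ a - b)
  · refine ⟨if a + k + 1 < n then a + k + 1 else a + k + 1 - n, ?_⟩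
    simp only [Nat.dist] at *
    split_ifs <;> omega
  · refine ⟨if k + 1 ≤ a then a - (k + 1) else a + n - (k + 1), ?_⟩
    simp only [Nat.dist] at *
    split_ifs <;> omega

lemma nonadjWitness (n k a b : ℕ) (hk : 1 ≤ k) (hn : 2 * (k + 1) < n) (ha : a < n) (hb : b < n)
    (h1 : k < Nat.dist a b) (h2 : Nat.dist a b < n - k) :
    ∃ m, m < n ∧ m ≠ b ∧ (Nat.dist b m ≤ k ∨ n - k ≤ Nat.dist b m) ∧
      m ≠ a ∧ k < Nat.dist a m ∧ Nat.dist a m < n - k := by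
  by_cases hd : (a ≤ b ∧ b - a ≤ n - k - 2) ∨ (b < a ∧ b + n - a ≤ n - k - 2)
  · refine ⟨if b + 1 < n then b + 1 else 0, ?_⟩
    simp only [Nat.dist] at *
    split_ifs <;> omega
  · refine ⟨if 1 ≤ b then b - 1 else n - 1, ?_⟩
    simp only [Nat.dist] at *
    split_ifs <;> omega

lemma antipode_adj (n k a b w : ℕ) (hk : 1 ≤ k) (hn : n = 2 * (k + 1))
    (ha : a < n) (hb : b < n) (hw : w < n)
    (hant : a = b + (k + 1) ∨ b = a + (k + 1))
    (h1 : b ≠ w) (h2 : Nat.dist b w ≤ k ∨ n - k ≤ Nat.dist b w) :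
    a ≠ w ∧ (Nat.dist a w ≤ k ∨ n - k ≤ Nat.dist a w) := by
  simp only [Nat.dist] at *
  omega

/-- For `n ≥ 2(k+1)`, the instance `(W_n^k; C)` is a clutter iff
`n > 2(k+1)` or `C = V`. -/
theorem web_clutter_iff (n k : ℕ) (hk : 1 ≤ k) (hn : 2 * (k + 1) ≤ n) (C : Set (Fin n)) :
    IsClutter (webG n k) C ↔ (2 * (k + 1) < n ∨ C = Set.univ) := by
  constructor
  · intro hcl
    by_contra hcon
    push_neg at hcon
    obtain ⟨hle, hC⟩ := hcon
    have hn2 : n = 2 * (k + 1) := le_antisymm hle hn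
    obtain ⟨v, hv⟩ : ∃ v, v ∉ C := by
      by_contra h
      push_neg at h
      exact hC (Set.eq_univ_of_forall h)
    have hb : v.1 < n := v.2
    have hant : (if v.1 + (k + 1) < n then v.1 + (k + 1) else v.1 + (k + 1) - n) < n := by
      split_ifs <;> omega
    set a : ℕ := if v.1 + (k + 1) < n then v.1 + (k + 1) else v.1 + (k + 1) - n with ha_def
    have hrel : a = v.1 + (k + 1) ∨ v.1 = a + (k + 1) := by
      rw [ha_def]; split_ifs <;> omega
    refine hcl ⟨a, hant⟩ v ?_ ?_
    · intro h
      have := congrArg Fin.val h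
      simp only at this
      omega
    · intro w hw
      rw [mem_gN] at hw ⊢
      rcases hw with hw | hw
      · left
        rw [webG_adj] at hw ⊢
        exact antipode_adj n k a v.1 w.1 hk hn2 hant hb w.2 hrel hw.1 hw.2
      · exact absurd hw.1 hv
  · intro hside u v huv hsub
    have hab : u.1 ≠ v.1 := fun h => huv (Fin.ext h)
    by_cases hadj : Nat.dist u.1 v.1 ≤ k ∨ n - k ≤ Nat.dist u.1 v.1
    · obtain ⟨m, hm, hmb, hmadj, hma, hma1, hma2⟩ :=
        adjWitness n k u.1 v.1 hk hn u.2 v.2 hab hadj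
      have hwv : (⟨m, hm⟩ : Fin n) ∈ gN (webG n k) C v := by
        rw [mem_gN]
        left
        rw [webG_adj]
        exact ⟨Ne.symm hmb, by rwa [Nat.dist_comm] at hmadj ⊢⟩
      have := hsub hwv
      rw [mem_gN] at this
      rcases this with h | h
      · rw [webG_adj] at h
        simp only [Fin.val_mk] at h
        omega
      · exact hma (congrArg Fin.val h.2)
    · push_neg at hadj
      obtain ⟨h1, h2⟩ := hadj
      by_cases hvC : v ∈ C
      · have hwv : v ∈ gN (webG n k) C v := mem_gN.mpr (Or.inr ⟨hvC, rfl⟩)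
        have := hsub hwv
        rw [mem_gN] at this
        rcases this with h | h
        · rw [webG_adj] at h
          omega
        · exact huv h.2.symm
      · have hlt : 2 * (k + 1) < n := by
          rcases hside with h | h
          · exact h
          · exact absurd (h ▸ Set.mem_univ v) hvC
        obtain ⟨m, hm, hmb, hmadj, hma, hma1, hma2⟩ :=
          nonadjWitness n k u.1 v.1 hk hlt u.2 v.2 h1 h2
        have hwv : (⟨m, hm⟩ : Fin n) ∈ gN (webG n k) C v := by
          rw [mem_gN]
          left
          rw [webG_adj]
          exact ⟨Ne.symm hmb, by rwa [Nat.dist_comm] at hmadj ⊢⟩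
        have := hsub hwv
        rw [mem_gN] at this
        rcases this with h | h
        · rw [webG_adj] at h
          simp only [Fin.val_mk] at h
          omega
        · exact hma (congrArg Fin.val h.2)

end LegalSeq
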